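/- In the conflict graph G_C, for every vertex u corresponding to an edge (a_i, b_j) of G_I, the closed neighborhood N[u] is covered by the six sets S_u^{i−1}, S_u^i, S_u^{i+1}, S_u^{j−1}, S_u^j, S_u^{j+1}, and each of these sets is a clique in G_C. -/

import Mathlib

open Finset

/-- The conflict graph `G_C` of a bipartite graph `G_I`: vertices are the edges
of `G_I` (an edge `(i, j)` joins `a_i ∈ A` to `b_j ∈ B`), and two distinct edges
`(i, j)`, `(k, l)` are adjacent iff `k ∈ {i-1, i, i+1}` or `l ∈ {j-1, j, j+1}`. -/
def ConflictGraph (E : Set (ℤ × ℤ)) : SimpleGraph {e : ℤ × ℤ // e ∈ E} where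
  Adj u v := u ≠ v ∧ (|v.val.1 - u.val.1| ≤ 1 ∨ |v.val.2 - u.val.2| ≤ 1)
  symm := by
    constructor
    rintro u v ⟨h1, h2⟩
    refine ⟨h1.symm, ?_⟩
    rcases h2 with h | h
    · left; rw [abs_sub_comm]; exact h
    · right; rw [abs_sub_comm]; exact h
  loopless := by constructor; rintro u ⟨h, -⟩; exact h rfl

/-- The set `S_u^r` (left side): members of the closed neighborhood of `u`
whose corresponding edge of `G_I` has left endpoint `a_r`. -/
def SA (E : Set (ℤ × ℤ)) (u : {e : ℤ × ℤ // e ∈ E}) (r : ℤ) :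
    Set {e : ℤ × ℤ // e ∈ E} :=
  {v | (v = u ∨ (ConflictGraph E).Adj u v) ∧ v.val.1 = r}

/-- The set `S_u^r` (right side): members of the closed neighborhood of `u`
whose corresponding edge of `G_I` has right endpoint `b_r`. -/
def SB (E : Set (ℤ × ℤ)) (u : {e : ℤ × ℤ // e ∈ E}) (r : ℤ) :
    Set {e : ℤ × ℤ // e ∈ E} :=
  {v | (v = u ∨ (ConflictGraph E).Adj u v) ∧ v.val.2 = r}

/-- For every vertex `u = (a_i, b_j)` of the conflict graph, the closed
neighborhood `N[u]` is covered by the six sets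
`S_u^{i-1}, S_u^i, S_u^{i+1}, S_u^{j-1}, S_u^j, S_u^{j+1}`,
and each of these sets is a clique in `G_C`. -/
theorem closed_nbhd_covered_by_six_cliques (E : Set (ℤ × ℤ))
    (u : {e : ℤ × ℤ // e ∈ E}) :
    (∀ v : {e : ℤ × ℤ // e ∈ E}, (v = u ∨ (ConflictGraph E).Adj u v) →
      v ∈ SA E u (u.val.1 - 1) ∪ SA E u u.val.1 ∪ SA E u (u.val.1 + 1) ∪
          SB E u (u.val.2 - 1) ∪ SB E u u.val.2 ∪ SB E u (u.val.2 + 1)) ∧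
    (∀ r : ℤ, (ConflictGraph E).IsClique (SA E u r) ∧
              (ConflictGraph E).IsClique (SB E u r)) := by
  constructor
  · intro v hv
    rcases hv with rfl | hadj
    · left; left; left; left; right
      exact ⟨Or.inl rfl, rfl⟩
    · rcases hadj.2 with h | h
      · have h1 : v.val.1 = u.val.1 - 1 ∨ v.val.1 = u.val.1 ∨ v.val.1 = u.val.1 + 1 := by
          rw [abs_le] at h; omega
        rcases h1 with h1 | h1 | h1
        · left; left; left; left; left; exact ⟨Or.inr hadj, h1⟩
        · left; left; left; left; right; exact ⟨Or.inr hadj, h1⟩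
        · left; left; left; right; exact ⟨Or.inr hadj, h1⟩
      · have h1 : v.val.2 = u.val.2 - 1 ∨ v.val.2 = u.val.2 ∨ v.val.2 = u.val.2 + 1 := by
          rw [abs_le] at h; omega
        rcases h1 with h1 | h1 | h1
        · left; left; right; exact ⟨Or.inr hadj, h1⟩
        · left; right; exact ⟨Or.inr hadj, h1⟩
        · right; exact ⟨Or.inr hadj, h1⟩
  · intro r
    constructor
    · intro v hv w hw hne
      refine ⟨hne, Or.inl ?_⟩
      have := hv.2; have := hw.2
      simp only [abs_le]; omega
    · intro v hv w hw hne
      refine ⟨hne, Or.inr ?_⟩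
      have := hv.2; have := hw.2
      simp only [abs_le]; omega
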